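/- Suppose Γ acts by automorphisms on the Γ-algebra B. If P is a Γ-graded projective A-module and N is a projective B-module, then P ⋉_Γ N is a Γ-graded projective (A ⋉_Γ B)-module. -/

import Mathlib

open scoped TensorProduct

/-- If `Γ` acts by automorphisms on `B`, `P` is a `Γ`-graded projective `A`-module and
`N` a projective `B`-module, then `P ⋉_Γ N` is a projective `(A ⋉_Γ B)`-module (with its
natural `Γ`-grading). -/
theorem stmt10 {K : Type*} [Field K] {Γ : Type*} [AddMonoid Γ] [DecidableEq Γ]
    {A : Type*} [Ring A] [Algebra K A] (𝒜 : Γ → Submodule K A) [GradedAlgebra 𝒜]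
    {B : Type*} [Ring B] [Algebra K B]
    (ρ : Γ → (B ≃ₐ[K] B))
    (hρ0 : ∀ b : B, ρ 0 b = b)
    (hρadd : ∀ γ₁ γ₂ : Γ, ∀ b : B, ρ (γ₁ + γ₂) b = ρ γ₂ (ρ γ₁ b))
    -- the skew product algebra `C = A ⋉_Γ B`
    {C : Type*} [Ring C] [Algebra K C]
    (e : (A ⊗[K] B) ≃ₗ[K] C)
    (he1 : e ((1 : A) ⊗ₜ[K] (1 : B)) = 1)
    (hemul : ∀ (γ₂ : Γ) (a₁ a₂ : A), a₂ ∈ 𝒜 γ₂ → ∀ b₁ b₂ : B,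
      e (a₁ ⊗ₜ[K] b₁) * e (a₂ ⊗ₜ[K] b₂) = e ((a₁ * a₂) ⊗ₜ[K] (ρ γ₂ b₁ * b₂)))
    -- `P` : a `Γ`-graded projective `A`-module
    {P : Type*} [AddCommGroup P] [Module K P] [Module A P] [IsScalarTower K A P]
    (Pgr : Γ → Submodule K P) (hInt : DirectSum.IsInternal Pgr)
    (hsmul : ∀ (γ₁ γ₂ : Γ) (a : A) (x : P), a ∈ 𝒜 γ₁ → x ∈ Pgr γ₂ → a • x ∈ Pgr (γ₁ + γ₂))
    (hPproj : Module.Projective A P)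
    -- `N` : a projective `B`-module
    {N : Type*} [AddCommGroup N] [Module K N] [Module B N] [IsScalarTower K B N]
    (hNproj : Module.Projective B N)
    -- `Q = P ⋉_Γ N` : the `C`-module structure on `P ⊗ N`
    {Q : Type*} [AddCommGroup Q] [Module K Q] [Module C Q] [IsScalarTower K C Q]
    (eQ : (P ⊗[K] N) ≃ₗ[K] Q)
    (hQsmul : ∀ (γ₂ : Γ) (x : P), x ∈ Pgr γ₂ → ∀ (a : A) (b : B) (y : N),
      e (a ⊗ₜ[K] b) • eQ (x ⊗ₜ[K] y) = eQ ((a • x) ⊗ₜ[K] ((ρ γ₂ b) • y))) :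
    Module.Projective C Q := by
  classical
  obtain ⟨s, hs⟩ := hPproj.out
  obtain ⟨t, ht⟩ := hNproj.out
  have hAtop : (⨆ γ, 𝒜 γ) = ⊤ :=
    (DirectSum.Decomposition.isInternal 𝒜).submodule_iSup_eq_top
  have hPtop : (⨆ γ, Pgr γ) = ⊤ := hInt.submodule_iSup_eq_top
  have hρsymm : ∀ (γ₁ γ₂ : Γ) (z : B),
      (ρ (γ₁ + γ₂)).symm z = (ρ γ₁).symm ((ρ γ₂).symm z) := by
    intro γ₁ γ₂ z
    apply (ρ (γ₁ + γ₂)).injective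
    rw [AlgEquiv.apply_symm_apply, hρadd, AlgEquiv.apply_symm_apply,
      AlgEquiv.apply_symm_apply]
  -- key multiplicative identity in C
  have hkey : ∀ (γ₁ γ₂ : Γ) (a : A), a ∈ 𝒜 γ₁ → ∀ (b τ : B) (α : A),
      e ((1:A) ⊗ₜ[K] (ρ (γ₁ + γ₂)).symm (ρ γ₂ b * τ)) * e ((a * α) ⊗ₜ[K] (1:B)) =
      e (a ⊗ₜ[K] b) * (e ((1:A) ⊗ₜ[K] (ρ γ₂).symm τ) * e (α ⊗ₜ[K] (1:B))) := by
    intro γ₁ γ₂ a ha b τ α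
    have hα : α ∈ ⨆ γ, 𝒜 γ := by rw [hAtop]; exact Submodule.mem_top
    refine Submodule.iSup_induction (motive := fun α =>
      e ((1:A) ⊗ₜ[K] (ρ (γ₁ + γ₂)).symm (ρ γ₂ b * τ)) * e ((a * α) ⊗ₜ[K] (1:B)) =
      e (a ⊗ₜ[K] b) * (e ((1:A) ⊗ₜ[K] (ρ γ₂).symm τ) * e (α ⊗ₜ[K] (1:B)))) 𝒜 hα ?_ ?_ ?_
    · intro γ' α hα'
      rw [hemul γ' 1 α hα' ((ρ γ₂).symm τ) 1, one_mul, mul_one,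
        hemul γ' a α hα' b (ρ γ' ((ρ γ₂).symm τ)),
        hemul (γ₁ + γ') 1 (a * α) (SetLike.mul_mem_graded ha hα') _ 1, one_mul, mul_one]
      congr 1
      rw [hρadd, hρsymm, AlgEquiv.apply_symm_apply, map_mul, AlgEquiv.symm_apply_apply,
        map_mul]
    · simp
    · intro α₁ α₂ h₁ h₂
      simp only [mul_add, TensorProduct.add_tmul, map_add, mul_add] at h₁ h₂ ⊢
      rw [h₁, h₂]
  -- action of `e (a ⊗ 1)`
  have hS1 : ∀ (a : A) (p : P) (n : N),
      e (a ⊗ₜ[K] (1:B)) • eQ (p ⊗ₜ[K] n) = eQ ((a • p) ⊗ₜ[K] n) := by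
    intro a p n
    have hp : p ∈ ⨆ γ, Pgr γ := by rw [hPtop]; exact Submodule.mem_top
    refine Submodule.iSup_induction (motive := fun p =>
      e (a ⊗ₜ[K] (1:B)) • eQ (p ⊗ₜ[K] n) = eQ ((a • p) ⊗ₜ[K] n)) Pgr hp ?_ ?_ ?_
    · intro δ x hx
      rw [hQsmul δ x hx a 1 n, map_one, one_smul]
    · simp
    · intro x₁ x₂ h₁ h₂
      simp only [TensorProduct.add_tmul, map_add, smul_add, h₁, h₂]
  -- the comparison maps
  set F := ((P × N) →₀ C) with hF
  let vB : Γ → (A →ₗ[K] B →ₗ[K] C) := fun γ => LinearMap.mk₂ K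
    (fun a b => e ((1:A) ⊗ₜ[K] (ρ γ).symm b) * e (a ⊗ₜ[K] (1:B)))
    (by intros; simp [TensorProduct.add_tmul, mul_add])
    (by intro c a b
        show e ((1:A) ⊗ₜ[K] (ρ γ).symm b) * e ((c • a) ⊗ₜ[K] (1:B)) =
          c • (e ((1:A) ⊗ₜ[K] (ρ γ).symm b) * e (a ⊗ₜ[K] (1:B)))
        rw [← TensorProduct.smul_tmul', map_smul, mul_smul_comm])
    (by intros; simp [TensorProduct.tmul_add, add_mul])
    (by intros; simp [TensorProduct.tmul_smul, smul_mul_assoc])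
  let vL : Γ → (A ⊗[K] B →ₗ[K] C) := fun γ => TensorProduct.lift (vB γ)
  have hvL : ∀ (γ : Γ) (a : A) (b : B),
      vL γ (a ⊗ₜ[K] b) = e ((1:A) ⊗ₜ[K] (ρ γ).symm b) * e (a ⊗ₜ[K] (1:B)) :=
    fun γ a b => rfl
  let fTf := finsuppTensorFinsupp K K A B P N
  let Lm : Γ → ((P →₀ A) ⊗[K] (N →₀ B) →ₗ[K] F) := fun γ =>
    (Finsupp.mapRange.linearMap (vL γ)) ∘ₗ (fTf.toLinearMap)
  let sK : P →ₗ[K] (P →₀ A) := s.restrictScalars K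
  let tK : N →ₗ[K] (N →₀ B) := t.restrictScalars K
  let Φγ : ∀ γ : Γ, (Pgr γ →ₗ[K] N →ₗ[K] F) := fun γ =>
    (LinearMap.lcomp K F tK) ∘ₗ (TensorProduct.curry (Lm γ)) ∘ₗ (sK ∘ₗ (Pgr γ).subtype)
  let D : (DirectSum Γ fun γ => Pgr γ) ≃ₗ[K] P :=
    LinearEquiv.ofBijective (DirectSum.coeLinearMap Pgr) hInt
  let Φ : P →ₗ[K] (N →ₗ[K] F) :=
    (DirectSum.toModule K Γ _ Φγ) ∘ₗ (D.symm : P →ₗ[K] _)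
  let ω0 : P ⊗[K] N →ₗ[K] F := TensorProduct.lift Φ
  have hD : ∀ (γ : Γ) (x : P) (hx : x ∈ Pgr γ),
      D.symm x = DirectSum.lof K Γ (fun γ => Pgr γ) γ ⟨x, hx⟩ := by
    intro γ x hx
    rw [LinearEquiv.symm_apply_eq]
    show x = DirectSum.coeLinearMap Pgr (DirectSum.lof K Γ (fun γ => Pgr γ) γ ⟨x, hx⟩)
    rw [DirectSum.lof_eq_of, DirectSum.coeLinearMap_of]
  have hω : ∀ (γ : Γ) (x : P) (hx : x ∈ Pgr γ) (y : N),
      ω0 (x ⊗ₜ[K] y) = Lm γ ((s x) ⊗ₜ[K] (t y)) := by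
    intro γ x hx y
    show TensorProduct.lift Φ (x ⊗ₜ[K] y) = _
    rw [TensorProduct.lift.tmul]
    show (DirectSum.toModule K Γ _ Φγ) (D.symm x) y = _
    rw [hD γ x hx, DirectSum.toModule_lof]
    rfl
  -- C-semilinearity of ω0
  have hsm : ∀ (c : C) (q : Q), ω0 (eQ.symm (c • q)) = c • ω0 (eQ.symm q) := by
    intro c q
    obtain ⟨z, rfl⟩ : ∃ z, e z = c := ⟨e.symm c, e.apply_symm_apply c⟩
    induction z using TensorProduct.induction_on with
    | zero => simp
    | add z₁ z₂ h₁ h₂ => simp only [map_add, add_smul, h₁, h₂]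
    | tmul a b =>
      have ha : a ∈ ⨆ γ, 𝒜 γ := by rw [hAtop]; exact Submodule.mem_top
      refine Submodule.iSup_induction (motive := fun a =>
        ω0 (eQ.symm (e (a ⊗ₜ[K] b) • q)) = e (a ⊗ₜ[K] b) • ω0 (eQ.symm q)) 𝒜 ha ?_ ?_ ?_
      · intro γ₁ a ha₁
        obtain ⟨w, rfl⟩ : ∃ w, eQ w = q := ⟨eQ.symm q, eQ.apply_symm_apply q⟩
        induction w using TensorProduct.induction_on with
        | zero => simp
        | add w₁ w₂ h₁ h₂ => simp only [map_add, smul_add, h₁, h₂]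
        | tmul x y =>
          have hx : x ∈ ⨆ γ, Pgr γ := by rw [hPtop]; exact Submodule.mem_top
          refine Submodule.iSup_induction (motive := fun x =>
            ω0 (eQ.symm (e (a ⊗ₜ[K] b) • eQ (x ⊗ₜ[K] y))) =
              e (a ⊗ₜ[K] b) • ω0 (eQ.symm (eQ (x ⊗ₜ[K] y)))) Pgr hx ?_ ?_ ?_
          · intro γ₂ x hx₂
            rw [hQsmul γ₂ x hx₂ a b y, eQ.symm_apply_apply, eQ.symm_apply_apply,
              hω (γ₁ + γ₂) (a • x) (hsmul γ₁ γ₂ a x ha₁ hx₂) ((ρ γ₂ b) • y),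
              hω γ₂ x hx₂ y, map_smul, map_smul]
            ext pn
            obtain ⟨p, n⟩ := pn
            show Finsupp.mapRange.linearMap (vL (γ₁ + γ₂))
                (fTf ((a • s x) ⊗ₜ[K] ((ρ γ₂ b) • t y))) (p, n) =
              (e (a ⊗ₜ[K] b) • Finsupp.mapRange.linearMap (vL γ₂)
                (fTf ((s x) ⊗ₜ[K] (t y)))) (p, n)
            rw [Finsupp.smul_apply, Finsupp.mapRange.linearMap_apply,
              Finsupp.mapRange.linearMap_apply, Finsupp.mapRange_apply,
              Finsupp.mapRange_apply]
            show vL (γ₁ + γ₂) (fTf ((a • s x) ⊗ₜ[K] ((ρ γ₂ b) • t y)) (p, n)) =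
              e (a ⊗ₜ[K] b) * vL γ₂ (fTf ((s x) ⊗ₜ[K] (t y)) (p, n))
            rw [finsuppTensorFinsupp_apply, finsuppTensorFinsupp_apply,
              Finsupp.smul_apply, Finsupp.smul_apply, smul_eq_mul, smul_eq_mul,
              hvL, hvL]
            exact hkey γ₁ γ₂ a ha₁ b (t y n) (s x p)
          · simp
          · intro x₁ x₂ h₁ h₂
            simp only [TensorProduct.add_tmul, map_add, smul_add, h₁, h₂]
      · simp
      · intro a₁ a₂ h₁ h₂
        simp only [TensorProduct.add_tmul, map_add, add_smul, h₁, h₂]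
  -- the splitting
  let gen : P × N → Q := fun z => eQ (z.1 ⊗ₜ[K] z.2)
  let π : F →ₗ[C] Q := Finsupp.linearCombination C gen
  have hπ1 : ∀ (z : P × N) (c : C), π (Finsupp.single z c) = c • gen z := by
    intro z c; exact Finsupp.linearCombination_single (R := C) (v := gen) c z
  have hπL : ∀ (γ : Γ) (f : P →₀ A) (g : N →₀ B),
      π (Lm γ (f ⊗ₜ[K] g)) = g.sum fun n b => f.sum fun p a =>
        (e ((1:A) ⊗ₜ[K] (ρ γ).symm b) * e (a ⊗ₜ[K] (1:B))) • eQ (p ⊗ₜ[K] n) := by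
    intro γ f g
    induction f using Finsupp.induction_linear with
    | zero => simp
    | add f₁ f₂ h₁ h₂ =>
      rw [TensorProduct.add_tmul, map_add, map_add, h₁, h₂, ← Finsupp.sum_add]
      refine Finsupp.sum_congr fun n _ => ?_
      rw [Finsupp.sum_add_index' (fun p => by simp)
        (fun p a₁ a₂ => by rw [TensorProduct.add_tmul, map_add, mul_add, add_smul])]
    | single p a =>
      induction g using Finsupp.induction_linear with
      | zero => simp
      | add g₁ g₂ h₁ h₂ =>
        rw [TensorProduct.tmul_add, map_add, map_add, h₁, h₂]
        rw [Finsupp.sum_add_index' (fun n => by simp)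
          (fun n b₁ b₂ => by
            rw [← Finsupp.sum_add]
            refine Finsupp.sum_congr fun p' _ => ?_
            rw [map_add, TensorProduct.tmul_add, map_add, add_mul, add_smul])]
      | single n b =>
        rw [Finsupp.sum_single_index (by simp), Finsupp.sum_single_index (by simp)]
        show π (Finsupp.mapRange.linearMap (vL γ)
          (fTf (Finsupp.single p a ⊗ₜ[K] Finsupp.single n b))) = _
        rw [show fTf (Finsupp.single p a ⊗ₜ[K] Finsupp.single n b)
            = Finsupp.single (p, n) (a ⊗ₜ[K] b) from
            finsuppTensorFinsupp_single K K A B P N p a n b,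
          Finsupp.mapRange.linearMap_apply, Finsupp.mapRange_single, hπ1, hvL]
  have hsect : ∀ q : Q, π (ω0 (eQ.symm q)) = q := by
    intro q
    obtain ⟨w, rfl⟩ : ∃ w, eQ w = q := ⟨eQ.symm q, eQ.apply_symm_apply q⟩
    rw [eQ.symm_apply_apply]
    induction w using TensorProduct.induction_on with
    | zero => simp
    | add w₁ w₂ h₁ h₂ => simp only [map_add, h₁, h₂]
    | tmul x y =>
      have hx : x ∈ ⨆ γ, Pgr γ := by rw [hPtop]; exact Submodule.mem_top
      refine Submodule.iSup_induction (motive := fun x =>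
        π (ω0 (x ⊗ₜ[K] y)) = eQ (x ⊗ₜ[K] y)) Pgr hx ?_ ?_ ?_
      · intro γ x hx₂
        rw [hω γ x hx₂ y, hπL γ (s x) (t y)]
        have inner : ∀ (n : N) (b : B),
            ((s x).sum fun p a =>
              (e ((1:A) ⊗ₜ[K] (ρ γ).symm b) * e (a ⊗ₜ[K] (1:B))) • eQ (p ⊗ₜ[K] n)) =
            eQ (x ⊗ₜ[K] (b • n)) := by
          intro n b
          simp only [mul_smul, hS1]
          rw [← Finsupp.smul_sum]
          have : ((s x).sum fun p a => eQ ((a • p) ⊗ₜ[K] n)) = eQ (x ⊗ₜ[K] n) := by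
            conv_rhs => rw [← hs x, Finsupp.linearCombination_apply]
            rw [Finsupp.sum, Finsupp.sum, TensorProduct.sum_tmul, map_sum]
            rfl
          rw [this, hQsmul γ x hx₂ 1 ((ρ γ).symm b) n, one_smul,
            AlgEquiv.apply_symm_apply]
        simp only [inner]
        conv_rhs => rw [← ht y, Finsupp.linearCombination_apply]
        rw [Finsupp.sum, Finsupp.sum, TensorProduct.tmul_sum, map_sum]
        rfl
      · simp
      · intro x₁ x₂ h₁ h₂
        simp only [TensorProduct.add_tmul, map_add, h₁, h₂]
  let ωC : Q →ₗ[C] F :=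
    { toFun := fun q => ω0 (eQ.symm q)
      map_add' := by intro q₁ q₂; simp
      map_smul' := by intro c q; exact hsm c q }
  exact Module.Projective.of_split ωC π (by
    apply LinearMap.ext
    intro q
    exact hsect q)
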